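/- The Hausdorff dimension of C_{s,𝒟} equals liminf_n (−n ln N)/ln(s_n). -/

import Mathlib

open scoped ENNReal

open MeasureTheory Filter Set Topology

private lemma aux_norm_tsum_le {E : Type*} [NormedAddCommGroup E] [CompleteSpace E]
    (g : ℕ → E) (u : ℕ → ℝ) (hu : Summable u) (hg : ∀ i, ‖g i‖ ≤ u i) :
    ‖∑' i, g i‖ ≤ ∑' i, u i := by
  have hn : Summable fun i => ‖g i‖ :=
    Summable.of_nonneg_of_le (fun i => norm_nonneg _) hg hu
  exact (norm_tsum_le_tsum_norm hn).trans (Summable.tsum_le_tsum hg hn hu)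

set_option maxHeartbeats 1000000 in
/-- The Hausdorff dimension of `C_{s,𝒟}` equals
`liminf_n (−n ln N)/ln(sₙ)`.  Here `Rₙ = ∑_{i ≥ n} sᵢ` is the tail of the series after
the first `n` terms and the separation condition `κRₙ₊₁ ≤ M τ sₙ`, `M < 1`, holds. -/
theorem stmt_14 (p N : ℕ) (hN : 2 ≤ N)
    (s : ℕ → ℝ) (hs : ∀ n, 0 < s n) (hsum : Summable s)
    (d : ℕ → Fin N → EuclideanSpace ℝ (Fin p))
    (hzero : ∀ n, d n ⟨0, by omega⟩ = 0)
    (κ τ : ℝ) (hτ : 0 < τ)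
    (hκ : ∀ (n : ℕ) (i j : Fin N), i ≠ j → ‖d n i - d n j‖ ≤ κ)
    (hτd : ∀ (n : ℕ) (i j : Fin N), i ≠ j → τ ≤ ‖d n i - d n j‖)
    (R : ℕ → ℝ) (hR : ∀ n, R n = ∑' i, s (n + i))
    (M : ℝ) (hM : M < 1) (hsep : ∀ n, κ * R (n + 1) ≤ M * (τ * s n)) :
    dimH (Set.range fun σ : ℕ → Fin N => ∑' i, s i • d i (σ i))
      = Filter.atTop.liminf
          (fun n : ℕ => ENNReal.ofReal (-((n : ℝ) * Real.log N) / Real.log (s n))) := by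
  classical
  haveI : NeZero N := ⟨by omega⟩
  set F : (ℕ → Fin N) → EuclideanSpace ℝ (Fin p) := fun σ => ∑' i, s i • d i (σ i) with hF
  set A : ℕ → ℝ≥0∞ :=
    fun n => ENNReal.ofReal (-((n : ℝ) * Real.log N) / Real.log (s n)) with hA
  show dimH (Set.range F) = liminf A atTop
  -- basic facts
  have hτκ : τ ≤ κ := by
    have hne : (⟨0, by omega⟩ : Fin N) ≠ ⟨1, by omega⟩ := by simp [Fin.ext_iff]
    exact (hτd 0 _ _ hne).trans (hκ 0 _ _ hne)
  have hκ0 : 0 < κ := lt_of_lt_of_le hτ hτκ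
  have hdb : ∀ n (a b : Fin N), ‖d n a - d n b‖ ≤ κ := by
    intro n a b
    rcases eq_or_ne a b with rfl | hne
    · simpa using hκ0.le
    · exact hκ n a b hne
  have hdn : ∀ n (a : Fin N), ‖d n a‖ ≤ κ := by
    intro n a
    have := hdb n a ⟨0, by omega⟩
    rwa [hzero, sub_zero] at this
  have hgb : ∀ (σ σ' : ℕ → Fin N) (i : ℕ),
      ‖s i • d i (σ i) - s i • d i (σ' i)‖ ≤ κ * s i := by
    intro σ σ' i
    rw [← smul_sub, norm_smul, Real.norm_eq_abs, abs_of_pos (hs i), mul_comm]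
    exact mul_le_mul_of_nonneg_right (hdb _ _ _) (hs i).le
  have hsummand : ∀ σ : ℕ → Fin N, Summable fun i => s i • d i (σ i) := by
    intro σ
    refine Summable.of_norm_bounded (hsum.mul_left κ) fun i => ?_
    rw [norm_smul, Real.norm_eq_abs, abs_of_pos (hs i)]
    calc s i * ‖d i (σ i)‖ ≤ s i * κ := by
          exact mul_le_mul_of_nonneg_left (hdn i (σ i)) (hs i).le
      _ = κ * s i := mul_comm _ _
  have hstail : ∀ n, Summable fun i => s (i + n) := fun n => (summable_nat_add_iff n).2 hsum
  have hR' : ∀ n, R n = ∑' i, s (i + n) := by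
    intro n; rw [hR]; exact tsum_congr fun i => congrArg s (by omega)
  have hRpos : ∀ n, 0 < R n := by
    intro n; rw [hR' n]
    exact Summable.tsum_pos (hstail n) (fun i => (hs _).le) 0 (hs _)
  have hRrec : ∀ n, R n = s n + R (n + 1) := by
    intro n
    rw [hR' n, hR' (n + 1), Summable.tsum_eq_zero_add (hstail n)]
    congr 1
    · simp
    · exact tsum_congr fun i => congrArg s (by omega)
  have hM0 : 0 < M := by
    have h0 := hsep 0
    nlinarith [mul_pos hκ0 (hRpos 1), mul_pos hτ (hs 0)]
  have hR1le : ∀ n, R (n + 1) ≤ M * s n := by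
    intro n
    have h := hsep n
    nlinarith [hRpos (n + 1), hs n, mul_pos hM0 (hs n)]
  have hss : ∀ n, s (n + 1) ≤ M * s n := by
    intro n
    have h1 := hRrec (n + 1)
    have h2 := hRpos (n + 2)
    nlinarith [hR1le n]
  have hanti : Antitone s := by
    refine antitone_nat_of_succ_le fun n => ?_
    nlinarith [hss n, hs n]
  have hRle : ∀ n, R n ≤ 2 * s n := by
    intro n
    have := hRrec n
    nlinarith [hR1le n, hs n]
  have hs0 : Tendsto s atTop (𝓝 0) := hsum.tendsto_atTop_zero
  -- distance estimates
  have hclose : ∀ (σ σ' : ℕ → Fin N) (n : ℕ), (∀ i, i < n → σ i = σ' i) →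
      ‖F σ - F σ'‖ ≤ κ * R n := by
    intro σ σ' n hagree
    have hsub : F σ - F σ' = ∑' i, (s i • d i (σ i) - s i • d i (σ' i)) :=
      (Summable.tsum_sub (hsummand σ) (hsummand σ')).symm
    set g := fun i => s i • d i (σ i) - s i • d i (σ' i) with hg
    have hgsum : Summable g := (hsummand σ).sub (hsummand σ')
    have hsplit := Summable.sum_add_tsum_nat_add n hgsum
    have hzero' : ∑ i ∈ Finset.range n, g i = 0 := by
      refine Finset.sum_eq_zero fun i hi => ?_
      have := hagree i (Finset.mem_range.mp hi)
      simp [hg, this]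
    have heq : F σ - F σ' = ∑' i, g (i + n) := by
      rw [hsub, ← hsplit, hzero', zero_add]
    rw [heq]
    have hb : ∀ i, ‖g (i + n)‖ ≤ κ * s (i + n) := fun i => hgb σ σ' (i + n)
    calc ‖∑' i, g (i + n)‖ ≤ ∑' i, κ * s (i + n) :=
          aux_norm_tsum_le _ _ ((hstail n).mul_left κ) hb
      _ = κ * ∑' i, s (i + n) := tsum_mul_left
      _ = κ * R n := by rw [hR' n]
  have hsep' : ∀ (σ σ' : ℕ → Fin N) (k : ℕ), (∀ i, i < k → σ i = σ' i) → σ k ≠ σ' k →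
      (1 - M) * (τ * s k) ≤ ‖F σ - F σ'‖ := by
    intro σ σ' k hagree hne
    have hsub : F σ - F σ' = ∑' i, (s i • d i (σ i) - s i • d i (σ' i)) :=
      (Summable.tsum_sub (hsummand σ) (hsummand σ')).symm
    set g := fun i => s i • d i (σ i) - s i • d i (σ' i) with hg
    have hgsum : Summable g := (hsummand σ).sub (hsummand σ')
    have hsplit := Summable.sum_add_tsum_nat_add (k + 1) hgsum
    have hhead : ∑ i ∈ Finset.range (k + 1), g i = g k := by
      refine Finset.sum_eq_single_of_mem k (Finset.self_mem_range_succ k) fun i hi hik => ?_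
      have hik' : i < k := by
        have := Finset.mem_range.mp hi; omega
      simp [hg, hagree i hik']
    set T := ∑' i, g (i + (k + 1)) with hT
    have heq : F σ - F σ' = g k + T := by rw [hsub, ← hsplit, hhead]
    have hTle : ‖T‖ ≤ κ * R (k + 1) := by
      rw [hT]
      have hb : ∀ i, ‖g (i + (k + 1))‖ ≤ κ * s (i + (k + 1)) := fun i => hgb σ σ' (i + (k+1))
      calc ‖∑' i, g (i + (k+1))‖ ≤ ∑' i, κ * s (i + (k+1)) :=
            aux_norm_tsum_le _ _ ((hstail (k+1)).mul_left κ) hb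
        _ = κ * ∑' i, s (i + (k+1)) := tsum_mul_left
        _ = κ * R (k + 1) := by rw [hR' (k+1)]
    have hgk : τ * s k ≤ ‖g k‖ := by
      have h1 : g k = s k • (d k (σ k) - d k (σ' k)) := by simp [hg, smul_sub]
      rw [h1, norm_smul, Real.norm_eq_abs, abs_of_pos (hs k)]
      rw [mul_comm τ (s k)]
      exact mul_le_mul_of_nonneg_left (hτd k _ _ hne) (hs k).le
    have htri : ‖g k‖ ≤ ‖g k + T‖ + ‖T‖ := by
      calc ‖g k‖ = ‖(g k + T) - T‖ := by rw [add_sub_cancel_right]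
        _ ≤ ‖g k + T‖ + ‖T‖ := norm_sub_le _ _
    have hsepk := hsep k
    rw [heq]
    nlinarith [hTle, hgk, htri]
  have hκR0 : Tendsto (fun n => κ * R n) atTop (𝓝 0) := by
    have h2s : Tendsto (fun n => κ * 2 * s n) atTop (𝓝 (κ * 2 * 0)) :=
      hs0.const_mul (κ * 2)
    rw [mul_zero] at h2s
    refine squeeze_zero (fun n => (mul_pos hκ0 (hRpos n)).le) (fun n => ?_) h2s
    have := mul_le_mul_of_nonneg_left (hRle n) hκ0.le
    nlinarith
  have hNlog : (0:ℝ) ≤ Real.log N := Real.log_nonneg (by exact_mod_cast by omega : (1:ℝ) ≤ N)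
  refine le_antisymm ?_ ?_
  · -- upper bound
    refine dimH_le fun d' hd' => ?_
    by_contra hlt
    rw [not_le] at hlt
    obtain ⟨b, hLb, hbd⟩ := exists_between hlt
    have hbtop : b ≠ ⊤ := hbd.ne_top
    set br := b.toReal with hbr
    set dr := (d' : ℝ) with hdr
    have hdr0 : (0:ℝ) ≤ dr := d'.2
    have hbr0 : (0:ℝ) ≤ br := ENNReal.toReal_nonneg
    have hbrdr : br < dr := by
      have h := (ENNReal.toReal_lt_toReal hbtop ENNReal.coe_ne_top).mpr hbd
      rwa [ENNReal.coe_toReal] at h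
    set ext : ∀ n : ℕ, (Fin n → Fin N) → (ℕ → Fin N) :=
      fun n w i => if h : i < n then w ⟨i, h⟩ else ⟨0, by omega⟩ with hext
    set t : ∀ n : ℕ, (Fin n → Fin N) → Set (EuclideanSpace ℝ (Fin p)) :=
      fun n w => EMetric.closedBall (F (ext n w)) (ENNReal.ofReal (κ * R n)) with ht
    have hrt : Tendsto (fun n => 2 * ENNReal.ofReal (κ * R n)) atTop (𝓝 0) := by
      have h1 : Tendsto (fun n => ENNReal.ofReal (κ * R n)) atTop (𝓝 (ENNReal.ofReal 0)) :=
        ENNReal.tendsto_ofReal hκR0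
      rw [ENNReal.ofReal_zero] at h1
      have h2 := ENNReal.Tendsto.const_mul (a := 2) h1 (Or.inr (by simp))
      rwa [mul_zero] at h2
    have hdiam : ∀ n (w : Fin n → Fin N),
        EMetric.diam (t n w) ≤ 2 * ENNReal.ofReal (κ * R n) :=
      fun n w => EMetric.diam_closedBall
    have hcover : ∀ n : ℕ, Set.range F ⊆ ⋃ w, t n w := by
      intro n x hx
      obtain ⟨σ, rfl⟩ := hx
      refine Set.mem_iUnion.2 ⟨fun i => σ i, ?_⟩
      show edist (F σ) (F (ext n fun i => σ i)) ≤ ENNReal.ofReal (κ * R n)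
      rw [edist_dist]
      refine ENNReal.ofReal_le_ofReal ?_
      rw [dist_eq_norm]
      refine hclose σ (ext n fun i => σ i) n fun i hi => ?_
      simp [hext, hi]
    have hH := Measure.hausdorffMeasure_le_liminf_sum dr (Set.range F)
      (fun n => 2 * ENNReal.ofReal (κ * R n)) hrt t
      (Filter.Eventually.of_forall fun n => hdiam n)
      (Filter.Eventually.of_forall hcover)
    set c : ℕ → ℝ≥0∞ := fun n => (N : ℝ≥0∞) ^ n *
      ENNReal.ofReal ((4 * (κ * s n)) ^ dr) with hc
    have hSc : ∀ n, (∑ w : Fin n → Fin N, EMetric.diam (t n w) ^ dr) ≤ c n := by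
      intro n
      calc ∑ w : Fin n → Fin N, EMetric.diam (t n w) ^ dr
          ≤ ∑ _w : Fin n → Fin N, ENNReal.ofReal ((4 * (κ * s n)) ^ dr) := by
            refine Finset.sum_le_sum fun w _ => ?_
            have h1 : EMetric.diam (t n w) ≤ ENNReal.ofReal (4 * (κ * s n)) := by
              refine (hdiam n w).trans ?_
              rw [show (2:ℝ≥0∞) = ENNReal.ofReal (2:ℝ) by simp]
              rw [← ENNReal.ofReal_mul (by norm_num)]
              refine ENNReal.ofReal_le_ofReal ?_
              nlinarith [hRle n, hκ0, hs n, hRpos n]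
            calc EMetric.diam (t n w) ^ dr ≤ ENNReal.ofReal (4 * (κ * s n)) ^ dr :=
                  ENNReal.rpow_le_rpow h1 hdr0
              _ = ENNReal.ofReal ((4 * (κ * s n)) ^ dr) :=
                  ENNReal.ofReal_rpow_of_nonneg (by nlinarith [hs n, hκ0]) hdr0
        _ = c n := by
            rw [Finset.sum_const, Finset.card_univ, Fintype.card_fun, Fintype.card_fin,
              Fintype.card_fin, nsmul_eq_mul, Nat.cast_pow]
    have hμle : μH[dr] (Set.range F) ≤ liminf c atTop :=
      hH.trans (liminf_le_liminf (Filter.Eventually.of_forall hSc))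
    have hfreq : ∃ᶠ n in atTop, A n < b :=
      frequently_lt_of_liminf_lt (by isBoundedDefault) hLb
    have hev1 : ∀ᶠ n in atTop, s n < 1 :=
      hs0.eventually_lt_const (by norm_num : (0:ℝ) < 1)
    have hpow0 : Tendsto (fun n => (4 * κ) ^ dr * s n ^ (dr - br)) atTop (𝓝 0) := by
      have hct : ContinuousAt (fun x : ℝ => x ^ (dr - br)) 0 :=
        Real.continuousAt_rpow_const 0 _ (Or.inr (by linarith))
      have h1 : Tendsto (fun n => s n ^ (dr - br)) atTop (𝓝 ((0:ℝ) ^ (dr - br))) :=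
        hct.tendsto.comp hs0
      rw [Real.zero_rpow (by linarith)] at h1
      have h2 := h1.const_mul ((4 * κ) ^ dr)
      rwa [mul_zero] at h2
    have hev2 : ∀ᶠ n in atTop, (4 * κ) ^ dr * s n ^ (dr - br) ≤ 1 :=
      (hpow0.eventually_lt_const (by norm_num : (0:ℝ) < 1)).mono fun n h => h.le
    have hfreq2 : ∃ᶠ n in atTop, c n ≤ 1 := by
      refine (hfreq.and_eventually (hev1.and hev2)).mono ?_
      rintro n ⟨hAn, hsn1, hsmall⟩
      have hsn := hs n
      have hlog : Real.log (s n) < 0 := Real.log_neg hsn hsn1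
      set l := -Real.log (s n) with hl
      have hl0 : 0 < l := by rw [hl]; linarith
      have haval : -((n:ℝ) * Real.log N) / Real.log (s n) = ((n:ℝ) * Real.log N) / l := by
        rw [hl, div_neg, neg_div]
      have haq : 0 ≤ ((n:ℝ) * Real.log N) / l := by positivity
      have hAn' : ((n:ℝ) * Real.log N) / l < br := by
        rw [hA] at hAn
        simp only [haval] at hAn
        exact (ENNReal.ofReal_lt_iff_lt_toReal haq hbtop).mp hAn
      have hNn : ((N:ℝ)) ^ n < s n ^ (-br) := by
        have h1 : (n:ℝ) * Real.log N < br * l := (div_lt_iff₀ hl0).mp hAn'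
        have h2 : (N:ℝ) ^ n = Real.exp ((n:ℝ) * Real.log N) := by
          rw [← Real.log_pow, Real.exp_log (by positivity)]
        have h3 : s n ^ (-br) = Real.exp (br * l) := by
          rw [Real.rpow_def_of_pos hsn]
          congr 1
          rw [hl]; ring
        rw [h2, h3]
        exact Real.exp_lt_exp.mpr h1
      have hreal : (N:ℝ) ^ n * (4 * (κ * s n)) ^ dr ≤ 1 := by
        have hx : (4 * (κ * s n)) ^ dr = (4 * κ) ^ dr * s n ^ dr := by
          rw [show 4 * (κ * s n) = (4 * κ) * s n by ring,
            Real.mul_rpow (by nlinarith) hsn.le]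
        have hmul : (N:ℝ) ^ n * (4 * (κ * s n)) ^ dr
            ≤ s n ^ (-br) * ((4 * κ) ^ dr * s n ^ dr) := by
          rw [hx]
          have hpos : 0 ≤ (4 * κ) ^ dr * s n ^ dr := by positivity
          nlinarith [hNn, hpos, Real.rpow_natCast (N:ℝ) n]
        have hcollect : s n ^ (-br) * ((4 * κ) ^ dr * s n ^ dr)
            = (4 * κ) ^ dr * s n ^ (dr - br) := by
          rw [show dr - br = -br + dr by ring, Real.rpow_add hsn]
          ring
        calc (N:ℝ) ^ n * (4 * (κ * s n)) ^ dr
            ≤ s n ^ (-br) * ((4 * κ) ^ dr * s n ^ dr) := hmul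
          _ = (4 * κ) ^ dr * s n ^ (dr - br) := hcollect
          _ ≤ 1 := hsmall
      rw [hc]
      calc (N : ℝ≥0∞) ^ n * ENNReal.ofReal ((4 * (κ * s n)) ^ dr)
          = ENNReal.ofReal ((N:ℝ) ^ n * (4 * (κ * s n)) ^ dr) := by
            rw [ENNReal.ofReal_mul (by positivity), ENNReal.ofReal_pow (by positivity),
              ENNReal.ofReal_natCast]
        _ ≤ ENNReal.ofReal 1 := ENNReal.ofReal_le_ofReal hreal
        _ = 1 := ENNReal.ofReal_one
    have hliminf : liminf c atTop ≤ 1 := liminf_le_of_frequently_le' hfreq2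
    rw [hd'] at hμle
    exact absurd (hμle.trans hliminf) (by simp)
  · -- lower bound
    refine ENNReal.le_of_forall_nnreal_lt fun d' hd' => ?_
    obtain ⟨b, hdb, hbL⟩ := exists_between hd'
    have hbtop : b ≠ ⊤ := hbL.ne_top
    set br := b.toReal with hbr
    set dr := (d' : ℝ) with hdrdef
    have hdr0 : (0:ℝ) ≤ dr := d'.2
    have hdrbr : dr < br := by
      have h := (ENNReal.toReal_lt_toReal ENNReal.coe_ne_top hbtop).mpr hdb
      rwa [ENNReal.coe_toReal] at h
    have hev1 : ∀ᶠ n in atTop, s n < 1 :=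
      hs0.eventually_lt_const (by norm_num : (0:ℝ) < 1)
    have hev2 : ∀ᶠ n in atTop, b < A n := eventually_lt_of_lt_liminf hbL
    obtain ⟨n₀, hn₀⟩ := eventually_atTop.mp (hev1.and hev2)
    have hkey : ∀ n, n₀ ≤ n → ((N:ℝ≥0∞) ^ n)⁻¹ ≤ ENNReal.ofReal (s n ^ dr) := by
      intro n hn
      obtain ⟨hsn1, hbA⟩ := hn₀ n hn
      have hsn := hs n
      have hlog := Real.log_neg hsn hsn1
      set l := -Real.log (s n) with hl
      have hl0 : 0 < l := by rw [hl]; linarith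
      have haval : -((n:ℝ) * Real.log N) / Real.log (s n) = ((n:ℝ) * Real.log N) / l := by
        rw [hl, div_neg, neg_div]
      have hbr_lt : br < ((n:ℝ) * Real.log N) / l := by
        rw [hA] at hbA
        simp only [haval] at hbA
        exact (ENNReal.lt_ofReal_iff_toReal_lt hbtop).mp hbA
      have h1 : br * l < (n:ℝ) * Real.log N := (lt_div_iff₀ hl0).mp hbr_lt
      have hNn : s n ^ (-br) < (N:ℝ) ^ n := by
        rw [show (N:ℝ) ^ n = Real.exp ((n:ℝ) * Real.log N) from by
          rw [← Real.log_pow, Real.exp_log (by positivity)]]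
        rw [show s n ^ (-br) = Real.exp (br * l) from by
          rw [Real.rpow_def_of_pos hsn]; congr 1; rw [hl]; ring]
        exact Real.exp_lt_exp.mpr h1
      have hrpow_le : s n ^ br ≤ s n ^ dr :=
        (Real.rpow_lt_rpow_of_exponent_gt hsn hsn1 hdrbr).le
      have hreal : ((N:ℝ) ^ n)⁻¹ ≤ s n ^ dr := by
        have hNpos : (0:ℝ) < (N:ℝ) ^ n := by positivity
        have h3 : s n ^ (-br) * s n ^ br = 1 := by
          rw [← Real.rpow_add hsn]; simp
        have h2 : 1 ≤ (N:ℝ) ^ n * s n ^ br := by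
          nlinarith [Real.rpow_pos_of_pos hsn br, hNn, h3]
        have h4 : ((N:ℝ) ^ n)⁻¹ ≤ s n ^ br := by
          rw [inv_eq_one_div, div_le_iff₀ hNpos]
          nlinarith [h2]
        exact h4.trans hrpow_le
      calc ((N:ℝ≥0∞) ^ n)⁻¹ = ENNReal.ofReal (((N:ℝ) ^ n)⁻¹) := by
            rw [ENNReal.ofReal_inv_of_pos (by positivity),
              ENNReal.ofReal_pow (by positivity), ENNReal.ofReal_natCast]
        _ ≤ ENNReal.ofReal (s n ^ dr) := ENNReal.ofReal_le_ofReal hreal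
    letI : MeasurableSpace (ℕ → ZMod N) := borel _
    haveI : BorelSpace (ℕ → ZMod N) := ⟨rfl⟩
    haveI : MeasurableAdd (ℕ → ZMod N) :=
      ⟨fun c => (continuous_add_left c).measurable, fun c => (continuous_add_right c).measurable⟩
    set K₀ : TopologicalSpace.PositiveCompacts (ℕ → ZMod N) := ⊤ with hK₀
    set μ : Measure (ℕ → ZMod N) := Measure.addHaarMeasure K₀ with hμ
    have hμuniv : μ Set.univ = 1 := by
      have h := Measure.addHaarMeasure_self (K₀ := K₀)
      rwa [hK₀, TopologicalSpace.PositiveCompacts.coe_top] at h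
    haveI hinv : μ.IsAddLeftInvariant := by rw [hμ]; infer_instance
    set e : ZMod N → Fin N := fun z => ⟨z.val, ZMod.val_lt z⟩ with he
    have he_inj : Function.Injective e := by
      intro a b h
      exact ZMod.val_injective N (congrArg Fin.val h)
    have he_sect : ∀ a : Fin N, e (((a : ℕ) : ZMod N)) = a := by
      intro a
      apply Fin.ext
      exact ZMod.val_cast_of_lt a.isLt
    set f' : (ℕ → ZMod N) → EuclideanSpace ℝ (Fin p) :=
      fun g => ∑' i, s i • d i (e (g i)) with hf'
    have hpre_surj : Function.Surjective
        (fun g : ℕ → ZMod N => (fun i => e (g i) : ℕ → Fin N)) := by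
      intro σ
      exact ⟨fun i => ((σ i : ℕ) : ZMod N), funext fun i => he_sect (σ i)⟩
    have hrange : Set.range f' = Set.range F := hpre_surj.range_comp F
    have hf'cont : Continuous f' := by
      refine continuous_tsum (fun i => ?_) (hsum.mul_left κ) (fun i g => ?_)
      · exact (continuous_of_discreteTopology
          (f := fun z : ZMod N => s i • d i (e z))).comp (continuous_apply i)
      · rw [norm_smul, Real.norm_eq_abs, abs_of_pos (hs i), mul_comm]
        exact mul_le_mul_of_nonneg_right (hdn _ _) (hs i).le
    have hf'meas : Measurable f' := hf'cont.measurable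
    set ν : Measure (EuclideanSpace ℝ (Fin p)) := Measure.map f' μ with hν
    have hcyl : ∀ (n : ℕ) (v : ℕ → ZMod N),
        μ {g : ℕ → ZMod N | ∀ i, i < n → g i = v i} = ((N:ℝ≥0∞) ^ n)⁻¹ := by
      intro n v
      set π : (ℕ → ZMod N) → (Fin n → ZMod N) := fun g i => g (i : ℕ) with hπ
      have hπcont : Continuous π := continuous_pi fun i => continuous_apply (i : ℕ)
      set C : (Fin n → ZMod N) → Set (ℕ → ZMod N) := fun w => π ⁻¹' {w} with hC
      have hmeasC : ∀ w, MeasurableSet (C w) :=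
        fun w => (isClosed_singleton.preimage hπcont).measurableSet
      have htrans : ∀ w : Fin n → ZMod N, μ (C w) = μ (C fun _ => 0) := by
        intro w
        set vw : ℕ → ZMod N := fun i => if h : i < n then w ⟨i, h⟩ else 0 with hvw
        have hπvw : π vw = w := by
          funext i
          show vw (i : ℕ) = w i
          rw [hvw]
          simp [i.isLt]
        have hCw : C w = (fun g => -vw + g) ⁻¹' (C fun _ => 0) := by
          ext g
          simp only [hC, Set.mem_preimage, Set.mem_singleton_iff]
          constructor
          · intro h
            funext i
            show π (-vw + g) i = 0
            have hsplit : π (-vw + g) i = -π vw i + π g i := rfl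
            rw [hsplit, hπvw, h]
            simp
          · intro h
            funext i
            have hi := congrFun h i
            have hsplit : π (-vw + g) i = -π vw i + π g i := rfl
            rw [hsplit, hπvw] at hi
            have hi' : -w i + π g i = 0 := hi
            exact (neg_add_eq_zero.mp hi').symm
        rw [hCw, measure_preimage_add]
      have hunion : ⋃ w : Fin n → ZMod N, C w = Set.univ := by
        ext g
        simp only [Set.mem_iUnion, Set.mem_univ, iff_true, hC, Set.mem_preimage,
          Set.mem_singleton_iff]
        exact ⟨π g, rfl⟩
      have hdisj : Pairwise (Function.onFun Disjoint C) := by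
        intro w w' hww
        rw [Function.onFun, Set.disjoint_left]
        intro g hgw hgw'
        rw [hC, Set.mem_preimage, Set.mem_singleton_iff] at hgw hgw'
        exact hww (hgw.symm.trans hgw')
      have hsum1 : ∑' w : Fin n → ZMod N, μ (C w) = 1 := by
        rw [← measure_iUnion hdisj hmeasC, hunion, hμuniv]
      have hcard : (Fintype.card (Fin n → ZMod N) : ℝ≥0∞) = (N:ℝ≥0∞) ^ n := by
        rw [Fintype.card_fun, Fintype.card_fin, ZMod.card]
        push_cast
        ring
      have hconst : ∑' w : Fin n → ZMod N, μ (C w)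
          = (Fintype.card (Fin n → ZMod N) : ℝ≥0∞) * μ (C fun _ => 0) := by
        rw [tsum_fintype, Finset.sum_congr rfl (fun w _ => htrans w), Finset.sum_const,
          Finset.card_univ, nsmul_eq_mul]
      have hNn_ne0 : ((N:ℝ≥0∞) ^ n) ≠ 0 := by
        apply pow_ne_zero
        exact_mod_cast (by omega : N ≠ 0)
      have hNn_netop : ((N:ℝ≥0∞) ^ n) ≠ ⊤ :=
        ENNReal.pow_ne_top (ENNReal.natCast_ne_top N)
      have h1 : (N:ℝ≥0∞) ^ n * μ (C fun _ => 0) = 1 := by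
        rw [← hcard, ← hconst, hsum1]
      have hC0 : μ (C fun _ => 0) = ((N:ℝ≥0∞) ^ n)⁻¹ := by
        calc μ (C fun _ => 0)
            = ((N:ℝ≥0∞) ^ n)⁻¹ * ((N:ℝ≥0∞) ^ n * μ (C fun _ => 0)) := by
              rw [← mul_assoc, ENNReal.inv_mul_cancel hNn_ne0 hNn_netop, one_mul]
          _ = ((N:ℝ≥0∞) ^ n)⁻¹ := by rw [h1, mul_one]
      have htarget : {g : ℕ → ZMod N | ∀ i, i < n → g i = v i} = C (π v) := by
        ext g
        simp only [hC, Set.mem_preimage, Set.mem_singleton_iff, Set.mem_setOf_eq]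
        constructor
        · intro h
          funext i
          exact h (i : ℕ) i.isLt
        · intro h i hi
          exact congrFun h ⟨i, hi⟩
      rw [htarget, htrans (π v), hC0]
    have hball : ∀ B : Set (EuclideanSpace ℝ (Fin p)), MeasurableSet B → ∀ n : ℕ,
        EMetric.diam B < ENNReal.ofReal ((1 - M) * (τ * s n)) →
        ν B ≤ ((N:ℝ≥0∞) ^ (n + 1))⁻¹ := by
      intro B hBmeas n hdiamB
      rw [hν, Measure.map_apply hf'meas hBmeas]
      rcases Set.eq_empty_or_nonempty (f' ⁻¹' B) with hemp | ⟨g₀, hg₀⟩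
      · simp [hemp]
      · have hsubset : f' ⁻¹' B ⊆ {g : ℕ → ZMod N | ∀ i, i < n + 1 → g i = g₀ i} := by
          intro g hg i hi
          by_contra hne
          have hex : ∃ j, g j ≠ g₀ j := ⟨i, hne⟩
          set k := Nat.find hex with hk
          have hkspec : g k ≠ g₀ k := Nat.find_spec hex
          have hkmin : ∀ j, j < k → g j = g₀ j :=
            fun j hj => not_not.mp (Nat.find_min hex hj)
          have hki : k ≤ i := Nat.find_min' hex hne
          have hkn : k ≤ n := by omega
          have hsep2 := hsep' (fun j => e (g j)) (fun j => e (g₀ j)) k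
            (fun j hj => congrArg e (hkmin j hj)) (fun hc => hkspec (he_inj hc))
          have hFg : F (fun j => e (g j)) = f' g := rfl
          have hFg0 : F (fun j => e (g₀ j)) = f' g₀ := rfl
          rw [hFg, hFg0] at hsep2
          have hdist : dist (f' g) (f' g₀) < (1 - M) * (τ * s n) := by
            have hgB : f' g ∈ B := hg
            have hg₀B : f' g₀ ∈ B := hg₀
            have hedist := EMetric.edist_le_diam_of_mem hgB hg₀B
            have hlt := lt_of_le_of_lt hedist hdiamB
            rw [edist_dist] at hlt
            exact (ENNReal.ofReal_lt_ofReal_iff_of_nonneg dist_nonneg).mp hlt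
          rw [dist_eq_norm] at hdist
          have h1M : (0:ℝ) < 1 - M := by linarith
          have hskn : s n ≤ s k := hanti hkn
          have hmm : (1 - M) * (τ * s n) ≤ (1 - M) * (τ * s k) :=
            mul_le_mul_of_nonneg_left (mul_le_mul_of_nonneg_left hskn hτ.le) h1M.le
          linarith [hsep2, hdist, hmm]
        calc μ (f' ⁻¹' B) ≤ μ {g : ℕ → ZMod N | ∀ i, i < n + 1 → g i = g₀ i} :=
              measure_mono hsubset
          _ = ((N:ℝ≥0∞) ^ (n + 1))⁻¹ := hcyl (n + 1) g₀
    set c₀ := (1 - M) * τ with hc₀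
    have hc₀pos : 0 < c₀ := by rw [hc₀]; nlinarith
    set Cc := ENNReal.ofReal (c₀ ^ (-dr)) with hCc
    have hCcpos : 0 < Cc := ENNReal.ofReal_pos.mpr (Real.rpow_pos_of_pos hc₀pos _)
    have hCc0 : Cc ≠ 0 := hCcpos.ne'
    have hCctop : Cc ≠ ⊤ := ENNReal.ofReal_ne_top
    set ε := ENNReal.ofReal (c₀ * s (n₀ + 1)) with hε
    have hεpos : 0 < ε := ENNReal.ofReal_pos.mpr (mul_pos hc₀pos (hs _))
    have hmass : ∀ B : Set (EuclideanSpace ℝ (Fin p)), EMetric.diam B ≤ ε →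
        ν B ≤ Cc * EMetric.diam B ^ dr := by
      intro B hB
      have hdiam' : EMetric.diam (closure B) = EMetric.diam B := EMetric.diam_closure B
      have hB'meas : MeasurableSet (closure B) := isClosed_closure.measurableSet
      have hνB : ν B ≤ ν (closure B) := measure_mono subset_closure
      have hfin : EMetric.diam B ≠ ⊤ :=
        (hB.trans_lt (by rw [hε]; exact ENNReal.ofReal_lt_top)).ne
      set δ := (EMetric.diam B).toReal with hδ
      have hδ0 : (0:ℝ) ≤ δ := ENNReal.toReal_nonneg
      have hdiam_eq : EMetric.diam B = ENNReal.ofReal δ := by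
        rw [hδ, ENNReal.ofReal_toReal hfin]
      have hδε : δ ≤ c₀ * s (n₀ + 1) := by
        have h := hB
        rw [hdiam_eq, hε] at h
        exact (ENNReal.ofReal_le_ofReal_iff (mul_pos hc₀pos (hs _)).le).mp h
      by_cases hcase : ∀ m : ℕ, δ < c₀ * s m
      · have hν0 : ∀ m : ℕ, ν B ≤ ((N:ℝ≥0∞) ^ (m + 1))⁻¹ := by
          intro m
          refine hνB.trans (hball (closure B) hB'meas m ?_)
          rw [hdiam', hdiam_eq, show (1 - M) * (τ * s m) = c₀ * s m by rw [hc₀]; ring]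
          exact (ENNReal.ofReal_lt_ofReal_iff (mul_pos hc₀pos (hs m))).mpr (hcase m)
        have htend : Tendsto (fun m : ℕ => ((N:ℝ≥0∞) ^ (m + 1))⁻¹) atTop (𝓝 0) := by
          have hb1 : (N:ℝ≥0∞)⁻¹ < 1 := by
            rw [ENNReal.inv_lt_one]
            exact_mod_cast (by omega : 1 < N)
          have h := (ENNReal.tendsto_pow_atTop_nhds_zero_of_lt_one hb1).comp
            (tendsto_add_atTop_nat 1)
          simpa [ENNReal.inv_pow, Function.comp_def] using h
        have hν00 : ν B ≤ 0 := ge_of_tendsto' htend hν0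
        exact hν00.trans zero_le
      · push_neg at hcase
        obtain ⟨m, hm⟩ := hcase
        have hexm : ∃ m, c₀ * s m ≤ δ := ⟨m, hm⟩
        set n1 := Nat.find hexm with hn1
        have hn1spec : c₀ * s n1 ≤ δ := Nat.find_spec hexm
        have hn1min : ∀ j, j < n1 → δ < c₀ * s j :=
          fun j hj => not_le.mp (Nat.find_min hexm hj)
        have hn1big : n₀ + 1 ≤ n1 := by
          by_contra hcon
          push_neg at hcon
          have h2 : s (n₀ + 1) ≤ M * s n₀ := hss n₀
          have h3 : s n₀ ≤ s n1 := hanti (by omega)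
          have h1 : s (n₀ + 1) < s n1 := by nlinarith [hs n₀, hs n1]
          nlinarith [hδε, hn1spec, hc₀pos]
        obtain ⟨n2, hn2⟩ : ∃ n2, n1 = n2 + 1 := ⟨n1 - 1, by omega⟩
        have hνle : ν B ≤ ((N:ℝ≥0∞) ^ (n2 + 1))⁻¹ := by
          refine hνB.trans (hball (closure B) hB'meas n2 ?_)
          rw [hdiam', hdiam_eq, show (1 - M) * (τ * s n2) = c₀ * s n2 by rw [hc₀]; ring]
          exact (ENNReal.ofReal_lt_ofReal_iff (mul_pos hc₀pos (hs n2))).mpr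
            (hn1min n2 (by omega))
        have hνle2 : ν B ≤ ENNReal.ofReal (s (n2 + 1) ^ dr) :=
          hνle.trans (hkey (n2 + 1) (by omega))
        have hs_le : s (n2 + 1) ≤ δ / c₀ := by
          rw [le_div_iff₀ hc₀pos]
          have := hn1spec
          rw [hn2] at this
          nlinarith [this]
        have hfinal : s (n2 + 1) ^ dr ≤ c₀ ^ (-dr) * δ ^ dr := by
          calc s (n2 + 1) ^ dr ≤ (δ / c₀) ^ dr :=
                Real.rpow_le_rpow (hs (n2 + 1)).le hs_le hdr0
            _ = δ ^ dr / c₀ ^ dr := Real.div_rpow hδ0 hc₀pos.le dr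
            _ = c₀ ^ (-dr) * δ ^ dr := by
                rw [Real.rpow_neg hc₀pos.le]
                ring
        calc ν B ≤ ENNReal.ofReal (s (n2 + 1) ^ dr) := hνle2
          _ ≤ ENNReal.ofReal (c₀ ^ (-dr) * δ ^ dr) := ENNReal.ofReal_le_ofReal hfinal
          _ = Cc * ENNReal.ofReal (δ ^ dr) := by
              rw [ENNReal.ofReal_mul (Real.rpow_pos_of_pos hc₀pos _).le, hCc]
          _ = Cc * EMetric.diam B ^ dr := by
              rw [hdiam_eq, ENNReal.ofReal_rpow_of_nonneg hδ0 hdr0]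
    have hμ'le : Cc⁻¹ • ν ≤ μH[dr] := by
      refine Measure.le_hausdorffMeasure dr _ ε hεpos fun B hB => ?_
      have h1 : (Cc⁻¹ • ν) B = Cc⁻¹ * ν B := rfl
      rw [h1]
      calc Cc⁻¹ * ν B ≤ Cc⁻¹ * (Cc * EMetric.diam B ^ dr) :=
            mul_le_mul_right (hmass B hB) _
        _ = EMetric.diam B ^ dr := by
            rw [← mul_assoc, ENNReal.inv_mul_cancel hCc0 hCctop, one_mul]
    have hrmeas : MeasurableSet (Set.range f') :=
      (isCompact_range hf'cont).isClosed.measurableSet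
    have hν_range : ν (Set.range f') = 1 := by
      rw [hν, Measure.map_apply hf'meas hrmeas, Set.preimage_range, hμuniv]
    have hμH_pos : μH[dr] (Set.range F) ≠ 0 := by
      rw [← hrange]
      have h2 : (Cc⁻¹ • ν) (Set.range f') ≤ μH[dr] (Set.range f') :=
        Measure.le_iff.mp hμ'le _ hrmeas
      have h3 : (Cc⁻¹ • ν) (Set.range f') = Cc⁻¹ := by
        have h5 : (Cc⁻¹ • ν) (Set.range f') = Cc⁻¹ * ν (Set.range f') := rfl
        rw [h5, hν_range, mul_one]
      have h4 : (0:ℝ≥0∞) < Cc⁻¹ := ENNReal.inv_pos.mpr hCctop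
      rw [h3] at h2
      exact (lt_of_lt_of_le h4 h2).ne'
    exact le_dimH_of_hausdorffMeasure_ne_zero hμH_pos
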